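/- (Property P1 of the smoothness indicator: smooth data give I = O(δ²).) Let δ > 0, let z₁,…,z_M ∈ ℝⁿ lie in the closed ball B̄(x_c, δ) around some center x_c, and let f : ℝⁿ → ℝ be of class C² on an open convex set U containing B̄(x_c, δ) with ‖D²f(y)‖ ≤ M₂ for all y ∈ U. Let p* be any affine function (polynomial of total degree ≤ 1 on ℝⁿ) minimizing Σ_{j=1}^M (f(z_j) − p(z_j))² over all affine p. Then the smoothness indicator I = (1/M) Σ_{j=1}^M |f(z_j) − p*(z_j)| satisfies I ≤ (M₂/2) δ². -/

import Mathlib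

open Metric Set

/-- Second-order Taylor bound for a `C²` function on an open convex set. -/
lemma taylor1_bound {E : Type*} [NormedAddCommGroup E] [NormedSpace ℝ E]
    {U : Set E} (hU : IsOpen U) (hUconv : Convex ℝ U)
    {f : E → ℝ} (hf : ContDiffOn ℝ 2 f U) {M₂ : ℝ}
    (hM₂ : ∀ y ∈ U, ‖iteratedFDerivWithin ℝ 2 f U y‖ ≤ M₂)
    {x y : E} (hx : x ∈ U) (hy : y ∈ U) :
    |f y - f x - fderivWithin ℝ f U x (y - x)| ≤ M₂ / 2 * ‖y - x‖ ^ 2 := by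
  have hUD : UniqueDiffOn ℝ U := hU.uniqueDiffOn
  have hd1 : DifferentiableOn ℝ f U := hf.differentiableOn (by norm_num)
  set G : E → (E [×1]→L[ℝ] ℝ) := iteratedFDerivWithin ℝ 1 f U with hG_def
  have hG : DifferentiableOn ℝ G U :=
    hf.differentiableOn_iteratedFDerivWithin (by norm_num) hUD
  have hGlip : ∀ a ∈ U, ∀ b ∈ U, ‖G b - G a‖ ≤ M₂ * ‖b - a‖ := by
    intro a ha b hb
    refine hUconv.norm_image_sub_le_of_norm_fderivWithin_le hG ?_ ha hb
    intro w hw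
    rw [hG_def, norm_fderivWithin_iteratedFDerivWithin]
    exact hM₂ w hw
  have hFlip : ∀ a ∈ U, ∀ b ∈ U, ∀ v : E,
      |fderivWithin ℝ f U b v - fderivWithin ℝ f U a v| ≤ M₂ * ‖b - a‖ * ‖v‖ := by
    intro a ha b hb v
    have h1 : fderivWithin ℝ f U a v = G a ![v] := by
      rw [hG_def, iteratedFDerivWithin_one_apply (hUD a ha)]
      simp
    have h2 : fderivWithin ℝ f U b v = G b ![v] := by
      rw [hG_def, iteratedFDerivWithin_one_apply (hUD b hb)]
      simp
    rw [h1, h2]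
    have := (G b - G a).le_opNorm ![v]
    simp only [ContinuousMultilinearMap.sub_apply] at this
    calc |G b ![v] - G a ![v]| ≤ ‖G b - G a‖ * ∏ i, ‖(![v] : Fin 1 → E) i‖ := this
      _ = ‖G b - G a‖ * ‖v‖ := by simp
      _ ≤ M₂ * ‖b - a‖ * ‖v‖ := by
          have := hGlip a ha b hb
          have hv : (0:ℝ) ≤ ‖v‖ := norm_nonneg _
          nlinarith [norm_nonneg (G b - G a)]
  set d := y - x with hd_def
  set c := fderivWithin ℝ f U x d with hc_def
  set γ : ℝ → E := fun t => x + t • d with hγ_def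
  have hγmem : ∀ t ∈ Icc (0:ℝ) 1, γ t ∈ U := fun t ht =>
    hUconv.add_smul_sub_mem hx hy ht
  set g : ℝ → ℝ := fun t => f (γ t) - f x - t * c with hg_def
  set g' : ℝ → ℝ := fun t => fderivWithin ℝ f U (γ t) d - c with hg'_def
  have hg'at : ∀ t ∈ Icc (0:ℝ) 1, HasDerivAt g (g' t) t := by
    intro t ht
    have hmem : γ t ∈ U := hγmem t ht
    have hfd : DifferentiableAt ℝ f (γ t) :=
      (hd1 (γ t) hmem).differentiableAt (hU.mem_nhds hmem)
    have hγ' : HasDerivAt γ d t := by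
      simpa [hγ_def] using ((hasDerivAt_id t).smul_const d).const_add x
    have hcomp : HasDerivAt (fun s => f (γ s)) (fderiv ℝ f (γ t) d) t :=
      hfd.hasFDerivAt.comp_hasDerivAt t hγ'
    have heq : fderiv ℝ f (γ t) d = fderivWithin ℝ f U (γ t) d := by
      rw [fderivWithin_of_isOpen hU hmem]
    have : HasDerivAt g (fderiv ℝ f (γ t) d - c) t := by
      exact (hcomp.sub_const (f x)).sub (hasDerivAt_mul_const c)
    rwa [heq] at this
  have key : ∀ t ∈ Icc (0:ℝ) 1, ‖g t‖ ≤ M₂ * ‖d‖ ^ 2 / 2 * t ^ 2 := by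
    refine image_norm_le_of_norm_deriv_right_le_deriv_boundary
      (f := g) (f' := g') (a := 0) (b := 1)
      (B := fun t => M₂ * ‖d‖ ^ 2 / 2 * t ^ 2) (B' := fun t => M₂ * ‖d‖ ^ 2 * t)
      ?_ ?_ ?_ ?_ ?_
    · intro t ht
      exact (hg'at t ht).continuousAt.continuousWithinAt
    · intro t ht
      exact ((hg'at t (Ico_subset_Icc_self ht)).hasDerivWithinAt)
    · simp [hg_def, hγ_def]
    · intro t
      have : HasDerivAt (fun s : ℝ => M₂ * ‖d‖ ^ 2 / 2 * s ^ 2)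
          (M₂ * ‖d‖ ^ 2 / 2 * (2 * t)) t := by
        simpa using (hasDerivAt_pow 2 t).const_mul (M₂ * ‖d‖ ^ 2 / 2)
      convert this using 1; ring
    · intro t ht
      have hmem : γ t ∈ U := hγmem t (Ico_subset_Icc_self ht)
      have := hFlip x hx (γ t) hmem d
      have hγsub : γ t - x = t • d := by simp [hγ_def]
      rw [hγsub] at this
      have hnorm : ‖t • d‖ = t * ‖d‖ := by
        rw [norm_smul, Real.norm_eq_abs, abs_of_nonneg ht.1]
      rw [hnorm] at this
      calc ‖g' t‖ = |fderivWithin ℝ f U (γ t) d - c| := rfl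
        _ ≤ M₂ * (t * ‖d‖) * ‖d‖ := this
        _ = M₂ * ‖d‖ ^ 2 * t := by ring
  have h1 := key 1 (by norm_num)
  have hxy : x + d = y := by rw [hd_def]; abel
  have : ‖f y - f x - c‖ ≤ M₂ * ‖d‖ ^ 2 / 2 := by
    simpa [hg_def, hγ_def, hxy] using h1
  calc |f y - f x - fderivWithin ℝ f U x (y - x)| = ‖f y - f x - c‖ := rfl
    _ ≤ M₂ * ‖d‖ ^ 2 / 2 := this
    _ = M₂ / 2 * ‖y - x‖ ^ 2 := by rw [hd_def]; ring

/-- An affine function on `ℝⁿ` (a polynomial of total degree ≤ 1): a linear functional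
plus a constant. -/
def IsAffineFn {n : ℕ} (p : EuclideanSpace ℝ (Fin n) → ℝ) : Prop :=
  ∃ (L : EuclideanSpace ℝ (Fin n) →ₗ[ℝ] ℝ) (c : ℝ), ∀ x, p x = L x + c

/-- Property P1 of the smoothness indicator: if the stencil points lie
in `B̄(x_c, δ)` and `f` is `C²` on an open convex `U ⊇ B̄(x_c, δ)` with `‖D²f‖ ≤ M₂`,
then the smoothness indicator `I = (1/M) Σⱼ |f(zⱼ) − p*(zⱼ)|` built from any least-squares
affine fit `p*` satisfies `I ≤ (M₂/2) δ²`. -/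
theorem smoothness_indicator_P1
    (n M : ℕ) (hM : 0 < M) (δ : ℝ) (hδ : 0 < δ)
    (xc : EuclideanSpace ℝ (Fin n))
    (z : Fin M → EuclideanSpace ℝ (Fin n))
    (hz : ∀ j, z j ∈ Metric.closedBall xc δ)
    (U : Set (EuclideanSpace ℝ (Fin n))) (hU : IsOpen U) (hUconv : Convex ℝ U)
    (hUball : Metric.closedBall xc δ ⊆ U)
    (f : EuclideanSpace ℝ (Fin n) → ℝ) (M₂ : ℝ)
    (hf : ContDiffOn ℝ 2 f U)
    (hM₂ : ∀ y ∈ U, ‖iteratedFDerivWithin ℝ 2 f U y‖ ≤ M₂)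
    (pstar : EuclideanSpace ℝ (Fin n) → ℝ)
    (hpstar_affine : IsAffineFn pstar)
    (hpstar_min : ∀ p : EuclideanSpace ℝ (Fin n) → ℝ, IsAffineFn p →
      ∑ j, (f (z j) - pstar (z j)) ^ 2 ≤ ∑ j, (f (z j) - p (z j)) ^ 2) :
    (1 / (M : ℝ)) * ∑ j, |f (z j) - pstar (z j)| ≤ (M₂ / 2) * δ ^ 2 := by
  have hxcU : xc ∈ U := hUball (Metric.mem_closedBall_self hδ.le)
  have hM₂0 : 0 ≤ M₂ := le_trans (norm_nonneg _) (hM₂ xc hxcU)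
  set K : ℝ := M₂ / 2 * δ ^ 2 with hK_def
  have hK0 : 0 ≤ K := by positivity
  -- the Taylor affine function
  set F := fderivWithin ℝ f U xc with hF_def
  set p₀ : EuclideanSpace ℝ (Fin n) → ℝ := fun x => f xc + F (x - xc) with hp₀_def
  have hp₀_aff : IsAffineFn p₀ := by
    refine ⟨(F : EuclideanSpace ℝ (Fin n) →L[ℝ] ℝ).toLinearMap, f xc - F xc, ?_⟩
    intro x
    simp [hp₀_def, map_sub]
    ring
  have hp₀_close : ∀ j, |f (z j) - p₀ (z j)| ≤ K := by
    intro j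
    have hzU : z j ∈ U := hUball (hz j)
    have := taylor1_bound hU hUconv hf hM₂ hxcU hzU
    have hdist : ‖z j - xc‖ ≤ δ := by
      have := hz j
      rwa [Metric.mem_closedBall, dist_eq_norm] at this
    calc |f (z j) - p₀ (z j)| = |f (z j) - f xc - F (z j - xc)| := by
          rw [hp₀_def]; ring_nf
      _ ≤ M₂ / 2 * ‖z j - xc‖ ^ 2 := this
      _ ≤ M₂ / 2 * δ ^ 2 := by
          have h2 : ‖z j - xc‖ ^ 2 ≤ δ ^ 2 := by nlinarith [norm_nonneg (z j - xc)]
          have h3 : (0:ℝ) ≤ M₂ / 2 := by linarith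
          exact mul_le_mul_of_nonneg_left h2 h3
  -- sum of squares bound
  have hsq : ∑ j, (f (z j) - pstar (z j)) ^ 2 ≤ M * K ^ 2 := by
    calc ∑ j, (f (z j) - pstar (z j)) ^ 2 ≤ ∑ j, (f (z j) - p₀ (z j)) ^ 2 :=
          hpstar_min p₀ hp₀_aff
      _ ≤ ∑ _j : Fin M, K ^ 2 := by
          refine Finset.sum_le_sum fun j _ => ?_
          have := hp₀_close j
          nlinarith [abs_nonneg (f (z j) - p₀ (z j)), sq_abs (f (z j) - p₀ (z j))]
      _ = M * K ^ 2 := by simp [mul_comm]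
  -- Cauchy-Schwarz
  have hCS : (∑ j, |f (z j) - pstar (z j)|) ^ 2
      ≤ M * ∑ j, (f (z j) - pstar (z j)) ^ 2 := by
    have := sq_sum_le_card_mul_sum_sq (s := (Finset.univ : Finset (Fin M)))
      (f := fun j => |f (z j) - pstar (z j)|)
    simpa [sq_abs] using this
  have hsum : ∑ j, |f (z j) - pstar (z j)| ≤ M * K := by
    have hMK0 : 0 ≤ (M : ℝ) * K := by positivity
    have h2 : (∑ j, |f (z j) - pstar (z j)|) ^ 2 ≤ ((M : ℝ) * K) ^ 2 := by
      calc (∑ j, |f (z j) - pstar (z j)|) ^ 2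
          ≤ M * ∑ j, (f (z j) - pstar (z j)) ^ 2 := hCS
        _ ≤ M * (M * K ^ 2) := by
            exact mul_le_mul_of_nonneg_left hsq (Nat.cast_nonneg M)
        _ = ((M : ℝ) * K) ^ 2 := by ring
    have hsum0 : 0 ≤ ∑ j, |f (z j) - pstar (z j)| :=
      Finset.sum_nonneg fun j _ => abs_nonneg _
    nlinarith
  have hMpos : (0:ℝ) < M := by exact_mod_cast hM
  rw [div_mul_eq_mul_div, one_mul, div_le_iff₀ hMpos] at *
  calc ∑ j, |f (z j) - pstar (z j)| ≤ M * K := hsum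
    _ = M₂ / 2 * δ ^ 2 * M := by rw [hK_def]; ring
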